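/- Let p ∈ (1,∞). For each fixed y ∈ (0,1), the map a ↦ G_a(y) is a continuous function of a on (0,∞). -/

import Mathlib

open Set Real Filter MeasureTheory
open Topology

/-- `F_a(y,w)` from the paper (with parameter `p`). -/
noncomputable def Fa (p a y w : ℝ) : ℝ :=
  (8*p*(1/a + 2*y) + (2*p/a + 4*(3*p - 2)*y + 2*(p - 1)*y*w)*w) / (y^2 * (4 + (p - 1)*w))

/-- `G` is the family `a ↦ G_a` of solutions of `G_a' = -F_a(y, G_a)` on `(0,1)`
with `G_a(1) = 0`: each `G_a` is continuous on `(0,1]`, positive on `(0,1)` and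
strictly decreasing on `(0,1]`. -/
def IsGFamily (p : ℝ) (G : ℝ → ℝ → ℝ) : Prop :=
  ∀ a : ℝ, 0 < a →
    ContinuousOn (G a) (Set.Ioc 0 1) ∧
    G a 1 = 0 ∧
    (∀ y ∈ Set.Ioo (0:ℝ) 1, HasDerivAt (G a) (-(Fa p a y (G a y))) y) ∧
    (∀ y ∈ Set.Ioo (0:ℝ) 1, 0 < G a y) ∧
    StrictAntiOn (G a) (Set.Ioc 0 1)

noncomputable def Fc (p c y w : ℝ) : ℝ :=
  (8*p*(c + 2*y) + (2*p*c + 4*(3*p - 2)*y + 2*(p - 1)*y*w)*w) / (y^2 * (4 + (p - 1)*w))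

noncomputable def dFc (p c y w : ℝ) : ℝ :=
  ((2*p*c + 4*(3*p - 2)*y + 4*(p - 1)*y*w) * (y^2 * (4 + (p - 1)*w))
    - (8*p*(c + 2*y) + (2*p*c + 4*(3*p - 2)*y + 2*(p - 1)*y*w)*w) * (y^2 * (p - 1)))
    / (y^2 * (4 + (p - 1)*w))^2

lemma Fa_eq_Fc (p a y w : ℝ) : Fa p a y w = Fc p (1/a) y w := by
  unfold Fa Fc; ring_nf

lemma denom_pos {p y w : ℝ} (hp : 1 < p) (hy : 0 < y) (hw : 0 ≤ w) :
    0 < y^2 * (4 + (p - 1)*w) := by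
  have h : 0 < 4 + (p - 1)*w := by nlinarith
  positivity

lemma Fc_nonneg {p c y w : ℝ} (hp : 1 < p) (hc : 0 ≤ c) (hy : 0 < y) (hw : 0 ≤ w) :
    0 ≤ Fc p c y w := by
  apply div_nonneg _ (denom_pos hp hy hw).le
  nlinarith [mul_nonneg hc hw, mul_nonneg (mul_nonneg hy.le hw) hw, mul_nonneg hy.le hw]

lemma hasDerivAt_Fc {p c y : ℝ} (hp : 1 < p) (hy : 0 < y) (w : ℝ) (hw : 0 ≤ w) :
    HasDerivAt (fun w => Fc p c y w) (dFc p c y w) w := by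
  have hD : HasDerivAt (fun w : ℝ => y^2 * (4 + (p - 1)*w)) (y^2 * (p - 1)) w := by
    simpa using ((((hasDerivAt_id w).const_mul (p-1)).const_add 4).const_mul (y^2))
  have h1 : HasDerivAt (fun w : ℝ => (2*p*c + 4*(3*p - 2)*y) + (2*(p - 1)*y)*w)
      (2*(p - 1)*y) w := by
    simpa using ((hasDerivAt_id w).const_mul (2*(p-1)*y)).const_add (2*p*c + 4*(3*p-2)*y)
  have h2 := (h1.mul (hasDerivAt_id w)).const_add (8*p*(c + 2*y))
  simp only [id_eq] at h2
  have hN : HasDerivAt (fun w : ℝ => 8*p*(c + 2*y) + (2*p*c + 4*(3*p - 2)*y + 2*(p - 1)*y*w)*w)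
      (2*p*c + 4*(3*p - 2)*y + 4*(p - 1)*y*w) w := by
    have hfun : (fun w : ℝ => 8*p*(c + 2*y) + (2*p*c + 4*(3*p - 2)*y + 2*(p - 1)*y*w)*w)
        = (fun w : ℝ => 8*p*(c + 2*y) + ((2*p*c + 4*(3*p - 2)*y) + (2*(p - 1)*y)*w)*w) := by
      funext w; ring
    rw [hfun]; exact h2.congr_deriv (by ring)
  have hne : y^2 * (4 + (p - 1)*w) ≠ 0 := (denom_pos hp hy hw).ne'
  exact hN.div hD hne



lemma Fc_le_linear {p c c2 y y0 w : ℝ} (hp : 1 < p) (hy0 : 0 < y0)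
    (hc : 0 ≤ c) (hcc : c ≤ c2) (hy : y0 ≤ y) (hy1 : y ≤ 1) (hw : 0 ≤ w) :
    Fc p c y w ≤ (8*p*c2 + 16*p)/(4*y0^2)
      + ((2*p*c2 + 4*(3*p - 2) + 8)/(4*y0^2) + 2/y0^2) * w := by
  set A0 : ℝ := (8*p*c2 + 16*p)/(4*y0^2) with hA0
  set L0 : ℝ := (2*p*c2 + 4*(3*p - 2) + 8)/(4*y0^2) + 2/y0^2 with hL0
  have hy' : 0 < y := lt_of_lt_of_le hy0 hy
  have hD := denom_pos hp hy' hw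
  have hc2 : 0 ≤ c2 := hc.trans hcc
  rw [Fc, div_le_iff₀ hD]
  have hy02 : (0:ℝ) < y0^2 := by positivity
  have hA0e : A0 * (4*y0^2) = 8*p*c2 + 16*p := by
    rw [hA0]; field_simp
  have hL0e : L0 * (4*y0^2) = 2*p*c2 + 4*(3*p - 2) + 8 + 8 := by
    rw [hL0]; field_simp; ring
  have hp0 : (0:ℝ) < p := by linarith
  have hA0n : 0 ≤ A0 := by
    rw [hA0]; apply div_nonneg (by nlinarith) (by positivity)
  have hL0n : 0 ≤ L0 := by
    rw [hL0]
    have : (0:ℝ) ≤ (2*p*c2 + 4*(3*p - 2) + 8)/(4*y0^2) := by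
      apply div_nonneg (by nlinarith) (by positivity)
    have h2 : (0:ℝ) ≤ 2/y0^2 := by positivity
    linarith
  have h2L : 2 ≤ L0 * y0^2 := by nlinarith
  have hyy : y0^2 ≤ y^2 := by nlinarith
  have h4w : (0:ℝ) < 4 + (p - 1)*w := by nlinarith
  nlinarith [mul_nonneg (add_nonneg hA0n (mul_nonneg hL0n hw))
      (mul_nonneg (sub_nonneg.2 hyy) h4w.le),
    mul_nonneg (mul_nonneg hp0.le (sub_nonneg.2 hcc)) hw,
    mul_nonneg hp0.le (sub_nonneg.2 hcc),
    mul_nonneg hp0.le (sub_nonneg.2 hy1),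
    mul_nonneg (mul_nonneg (by linarith : (0:ℝ) ≤ 3*p - 2) (sub_nonneg.2 hy1)) hw,
    mul_nonneg (mul_nonneg (by linarith : (0:ℝ) ≤ p - 1) (sub_nonneg.2 hy1)) (mul_nonneg hw hw),
    mul_nonneg (mul_nonneg (by linarith : (0:ℝ) ≤ p - 1) (mul_nonneg hw hw)) (by linarith : (0:ℝ) ≤ L0 * y0^2 - 2),
    mul_nonneg (mul_nonneg (mul_nonneg hA0n (by positivity : (0:ℝ) ≤ y0^2)) (by linarith : (0:ℝ) ≤ p - 1)) hw,
    hA0e, hL0e]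

lemma Fc_param_diff {p c c' y y0 w R : ℝ} (hp : 1 < p) (hy0 : 0 < y0)
    (hy : y0 ≤ y) (hw : 0 ≤ w) (hwR : w ≤ R) :
    |Fc p c y w - Fc p c' y w| ≤ ((8*p + 2*p*R)/(4*y0^2)) * |c - c'| := by
  have hy' : 0 < y := lt_of_lt_of_le hy0 hy
  have hD := denom_pos hp hy' hw
  have hp0 : (0:ℝ) < p := by linarith
  have heq : Fc p c y w - Fc p c' y w = (8*p + 2*p*w)*(c - c') / (y^2 * (4 + (p - 1)*w)) := by
    rw [Fc, Fc, div_sub_div_same]; congr 1; ring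
  rw [heq, abs_div, abs_of_pos hD, abs_mul, abs_of_nonneg (by nlinarith : (0:ℝ) ≤ 8*p + 2*p*w)]
  have h1 : (8*p + 2*p*w) * |c - c'| ≤ (8*p + 2*p*R) * |c - c'| := by
    apply mul_le_mul_of_nonneg_right (by nlinarith) (abs_nonneg _)
  have h2 : 4*y0^2 ≤ y^2 * (4 + (p - 1)*w) := by nlinarith [sq_nonneg y0, mul_nonneg (sub_nonneg.2 hp.le) hw]
  rw [div_mul_eq_mul_div]
  exact div_le_div₀ (mul_nonneg (by nlinarith) (abs_nonneg _)) h1 (by positivity) h2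

lemma exists_lip {p y0 c2 R : ℝ} (hp : 1 < p) (hy0 : 0 < y0) :
    ∃ K : ℝ, 1 ≤ K ∧ ∀ c ∈ Icc (0:ℝ) c2, ∀ y ∈ Icc y0 1,
      LipschitzOnWith K.toNNReal (fun w => Fc p c y w) (Icc 0 R) := by
  set S : Set (ℝ × ℝ × ℝ) := Icc 0 c2 ×ˢ Icc y0 1 ×ˢ Icc 0 R with hS
  have hcomp : IsCompact S := (isCompact_Icc).prod ((isCompact_Icc).prod isCompact_Icc)
  have hcont : ContinuousOn (fun q : ℝ×ℝ×ℝ => dFc p q.1 q.2.1 q.2.2) S := by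
    simp only [dFc]
    apply ContinuousOn.div
    · fun_prop
    · fun_prop
    · rintro ⟨c, y, w⟩ ⟨hc, hy, hw⟩
      dsimp only
      exact pow_ne_zero _ (denom_pos hp (lt_of_lt_of_le hy0 hy.1) hw.1).ne'
  obtain ⟨C, hC⟩ := hcomp.exists_bound_of_continuousOn hcont
  refine ⟨max C 1, le_max_right _ _, ?_⟩
  intro c hc y hy
  apply Convex.lipschitzOnWith_of_nnnorm_hasDerivWithin_le (convex_Icc 0 R)
    (fun w hw => (hasDerivAt_Fc hp (lt_of_lt_of_le hy0 hy.1) w hw.1).hasDerivWithinAt)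
  intro w hw
  rw [← norm_toNNReal]
  exact Real.toNNReal_mono ((hC (c,y,w) ⟨hc, hy, hw⟩).trans (le_max_left _ _))

set_option maxHeartbeats 1000000 in
theorem G_continuous_in_a (p : ℝ) (hp : 1 < p) (G : ℝ → ℝ → ℝ)
    (hG : IsGFamily p G) :
    ∀ y ∈ Set.Ioo (0:ℝ) 1, ContinuousOn (fun a => G a y) (Set.Ioi 0) := by
  intro y0 hy0
  have hy0p : (0:ℝ) < y0 := hy0.1
  have hy01 : y0 < 1 := hy0.2
  -- it suffices to prove continuity at each point
  intro a ha
  apply ContinuousAt.continuousWithinAt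
  have ha0 : (0:ℝ) < a := ha
  set α : ℝ := a/2 with hαdef
  have hα : 0 < α := by positivity
  have hαa : α < a := by rw [hαdef]; linarith
  set c2 : ℝ := 1/α with hc2def
  have hc2 : 0 ≤ c2 := by positivity
  -- the linear growth constants
  set A0 : ℝ := (8*p*c2 + 16*p)/(4*y0^2) with hA0def
  set L0 : ℝ := (2*p*c2 + 4*(3*p - 2) + 8)/(4*y0^2) + 2/y0^2 with hL0def
  have hp0 : (0:ℝ) < p := by linarith
  have hA0n : 0 ≤ A0 := by
    rw [hA0def]; apply div_nonneg (by nlinarith) (by positivity)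
  have hL0p : 0 < L0 := by
    rw [hL0def]
    have h1 : (0:ℝ) ≤ (2*p*c2 + 4*(3*p - 2) + 8)/(4*y0^2) := by
      apply div_nonneg (by nlinarith) (by positivity)
    have h2 : (0:ℝ) < 2/y0^2 := by positivity
    linarith
  set R : ℝ := A0/L0 * (Real.exp L0 - 1) with hRdef
  have hR : 0 ≤ R := by
    rw [hRdef]
    apply mul_nonneg (by positivity)
    have := Real.one_le_exp hL0p.le
    linarith
  -- basic facts about each trajectory
  have hcb : ∀ b : ℝ, 0 < b → 0 ≤ 1/b := fun b hb => by positivity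
  have hcbc2 : ∀ b : ℝ, α ≤ b → 1/b ≤ c2 := fun b hb => by
    rw [hc2def]; exact one_div_le_one_div_of_le hα hb
  -- reversed-time derivative
  have hrev : ∀ b : ℝ, 0 < b → ∀ t : ℝ, 0 < t → t < 1 →
      HasDerivAt (fun t => G b (1 - t)) (Fc p (1/b) (1-t) (G b (1-t))) t := by
    intro b hb t ht0 ht1
    obtain ⟨hcont, hval1, hderiv, hpos, hanti⟩ := hG b hb
    have h1 : HasDerivAt (fun t : ℝ => 1 - t) (-1) t := by
      simpa using (hasDerivAt_id t).const_sub 1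
    have hmem : (1 - t) ∈ Ioo (0:ℝ) 1 := ⟨by linarith, by linarith⟩
    have h2 := HasDerivAt.comp t (hderiv (1-t) hmem) h1
    have h3 : ((G b) ∘ fun t : ℝ => 1 - t) = fun t => G b (1 - t) := rfl
    rw [h3] at h2
    refine h2.congr_deriv ?_
    rw [Fa_eq_Fc]; ring
  -- endpoint limit
  have hend : ∀ b : ℝ, 0 < b →
      Tendsto (fun t1 => G b (1 - t1)) (𝓝[>] (0:ℝ)) (𝓝 0) := by
    intro b hb
    obtain ⟨hcont, hval1, hderiv, hpos, hanti⟩ := hG b hb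
    have hmap : Tendsto (fun t1 : ℝ => 1 - t1) (𝓝[>] (0:ℝ)) (𝓝[Ioc 0 1] 1) := by
      apply tendsto_nhdsWithin_of_tendsto_nhds_of_eventually_within
      · have h : Tendsto (fun t1 : ℝ => 1 - t1) (𝓝 (0:ℝ)) (𝓝 (1 - 0)) :=
          (tendsto_const_nhds.sub tendsto_id)
        simpa using h.mono_left nhdsWithin_le_nhds
      · filter_upwards [Ioo_mem_nhdsGT_of_mem
          (⟨le_refl (0:ℝ), zero_lt_one⟩ : (0:ℝ) ∈ Ico (0:ℝ) 1)] with t ht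
        exact ⟨by linarith [ht.2], by linarith [ht.1]⟩
    have h := ((hcont 1 (right_mem_Ioc.2 one_pos)).tendsto).comp hmap
    rw [hval1] at h
    exact h
  -- a priori bound
  have key1 : ∀ b : ℝ, α ≤ b → ∀ z ∈ Icc y0 1, G b z ∈ Icc 0 R := by
    intro b hb z hz
    have hb0 : 0 < b := lt_of_lt_of_le hα hb
    obtain ⟨hcont, hval1, hderiv, hpos, hanti⟩ := hG b hb0
    rcases eq_or_lt_of_le hz.2 with h1|h1
    · rw [h1, hval1]; exact ⟨le_refl 0, hR⟩
    have hz0 : 0 < z := lt_of_lt_of_le hy0p hz.1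
    have hGz : 0 < G b z := hpos z ⟨hz0, h1⟩
    refine ⟨hGz.le, ?_⟩
    -- Gronwall on [t1, 1-z] and limit t1 → 0⁺
    have hbnd : ∀ t1 ∈ Ioo (0:ℝ) (1 - z),
        G b z ≤ G b (1 - t1) * Real.exp L0 + R := by
      intro t1 ht1
      have hGpos' : ∀ t ∈ Icc t1 (1-z), 0 ≤ G b (1 - t) := by
        intro t ht
        have : (1 - t) ∈ Ioo (0:ℝ) 1 := ⟨by linarith [ht.2, h1], by linarith [ht.1, ht1.1]⟩
        exact (hpos _ this).le
      have hf : ContinuousOn (fun t => G b (1 - t)) (Icc t1 (1-z)) := by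
        apply hcont.comp ((by fun_prop : Continuous (fun t : ℝ => 1 - t)).continuousOn)
        intro t ht
        show (1:ℝ) - t ∈ Ioc 0 1
        exact ⟨by linarith [ht.2, h1, hz0], by linarith [ht.1, ht1.1]⟩
      have hf' : ∀ t ∈ Ico t1 (1-z), HasDerivWithinAt (fun t => G b (1 - t))
          (Fc p (1/b) (1-t) (G b (1-t))) (Ici t) t := by
        intro t ht
        exact (hrev b hb0 t (lt_of_lt_of_le ht1.1 ht.1) (by linarith [ht.2, hz0])).hasDerivWithinAt
      have hinit : ‖G b (1 - t1)‖ ≤ G b (1 - t1) := by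
        rw [Real.norm_eq_abs, abs_of_nonneg (hGpos' t1 ⟨le_refl _, by linarith [ht1.2]⟩)]
      have hbound : ∀ t ∈ Ico t1 (1-z), ‖Fc p (1/b) (1-t) (G b (1-t))‖
          ≤ L0 * ‖G b (1 - t)‖ + A0 := by
        intro t ht
        have hw : 0 ≤ G b (1 - t) := hGpos' t ⟨ht.1, ht.2.le⟩
        have hyt : y0 ≤ 1 - t := by linarith [ht.2, hz.1]
        have hyt1 : 1 - t ≤ 1 := by linarith [ht.1, ht1.1]
        have hFn : 0 ≤ Fc p (1/b) (1-t) (G b (1-t)) :=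
          Fc_nonneg hp (hcb b hb0) (by linarith [hz0]) hw
        rw [Real.norm_eq_abs, abs_of_nonneg hFn, Real.norm_eq_abs, abs_of_nonneg hw]
        have := Fc_le_linear (c := 1/b) (w := G b (1-t)) hp hy0p (hcb b hb0)
          (hcbc2 b hb) hyt hyt1 hw
        rw [← hA0def, ← hL0def] at this
        linarith
      have := norm_le_gronwallBound_of_norm_deriv_right_le hf hf' hinit hbound
        (1-z) ⟨ht1.2.le, le_refl _⟩
      have hzz : (1:ℝ) - (1 - z) = z := by ring
      rw [hzz, Real.norm_eq_abs, abs_of_nonneg hGz.le] at this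
      refine this.trans ?_
      rw [gronwallBound_of_K_ne_0 hL0p.ne']
      have hx1 : L0 * (1 - z - t1) ≤ L0 * 1 := by
        apply mul_le_mul_of_nonneg_left _ hL0p.le
        linarith [ht1.1, hz0]
      have hexp : Real.exp (L0 * (1 - z - t1)) ≤ Real.exp L0 := by
        rw [← mul_one L0] ; exact Real.exp_le_exp.2 (by simpa using hx1)
      have hδ : 0 ≤ G b (1 - t1) := hGpos' t1 ⟨le_refl _, by linarith [ht1.2]⟩
      have hA0L0 : 0 ≤ A0 / L0 := by positivity
      rw [hRdef]
      have h2 : A0 / L0 * (Real.exp (L0 * (1 - z - t1)) - 1)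
          ≤ A0 / L0 * (Real.exp L0 - 1) := by
        apply mul_le_mul_of_nonneg_left _ hA0L0
        linarith
      nlinarith [mul_le_mul_of_nonneg_left hexp hδ]
    -- take the limit t1 → 0⁺
    have hlim : Tendsto (fun t1 => G b (1 - t1) * Real.exp L0 + R) (𝓝[>] (0:ℝ))
        (𝓝 (0 * Real.exp L0 + R)) :=
      ((hend b hb0).mul_const _).add_const R
    have : G b z ≤ 0 * Real.exp L0 + R := by
      apply ge_of_tendsto hlim
      filter_upwards [Ioo_mem_nhdsGT_of_mem
        (⟨le_refl (0:ℝ), by linarith⟩ : (0:ℝ) ∈ Ico (0:ℝ) (1-z))] with t1 ht1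
      exact hbnd t1 ht1
    linarith [this]
  -- Lipschitz constant
  obtain ⟨K, hK1, hKlip⟩ := exists_lip (p := p) (y0 := y0) (c2 := c2) (R := R) hp hy0p
  have hKp : (0:ℝ) < K := by linarith
  set C0 : ℝ := (8*p + 2*p*R)/(4*y0^2) with hC0def
  have hC0n : 0 ≤ C0 := by
    rw [hC0def]; apply div_nonneg (by nlinarith) (by positivity)
  -- main estimate
  have key2 : ∀ b b' : ℝ, α ≤ b → α ≤ b' →
      dist (G b y0) (G b' y0) ≤ (C0 * |1/b - 1/b'|) / K * (Real.exp K - 1) := by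
    intro b b' hb hb'
    have hb0 : 0 < b := lt_of_lt_of_le hα hb
    have hb'0 : 0 < b' := lt_of_lt_of_le hα hb'
    set T : ℝ := 1 - y0 with hTdef
    have hT : 0 < T := by rw [hTdef]; linarith
    have hbnd : ∀ t1 ∈ Ioo (0:ℝ) T,
        dist (G b y0) (G b' y0) ≤ dist (G b (1-t1)) (G b' (1-t1)) * Real.exp K
          + (C0 * |1/b - 1/b'|) / K * (Real.exp K - 1) := by
      intro t1 ht1
      -- clamped vector field
      set v : ℝ → ℝ → ℝ := fun t x => Fc p (1/b') (min 1 (max y0 (1-t))) x with hvdef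
      have hymem : ∀ t : ℝ, min 1 (max y0 (1-t)) ∈ Icc y0 1 :=
        fun t => ⟨le_min (by linarith) (le_max_left _ _), min_le_left _ _⟩
      have hv : ∀ t, LipschitzOnWith K.toNNReal (v t) (Icc 0 R) :=
        fun t => hKlip (1/b') ⟨hcb b' hb'0, hcbc2 b' hb'⟩ _ (hymem t)
      have hclamp : ∀ t ∈ Ico t1 T, min 1 (max y0 (1-t)) = 1 - t := by
        intro t ht
        rw [max_eq_right (by rw [hTdef] at ht; linarith [ht.2]),
          min_eq_right (by linarith [ht.1, ht1.1])]
      have hmemIoo : ∀ t ∈ Ico t1 T, (1 - t) ∈ Ioo (0:ℝ) 1 := by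
        intro t ht
        rw [hTdef] at ht
        exact ⟨by linarith [ht.2], by linarith [ht.1, ht1.1]⟩
      have hmemIcc : ∀ t ∈ Ico t1 T, (1 - t) ∈ Icc y0 1 := by
        intro t ht
        rw [hTdef] at ht
        exact ⟨by linarith [ht.2], by linarith [ht.1, ht1.1]⟩
      have hfcont : ∀ c : ℝ, α ≤ c → ContinuousOn (fun t => G c (1 - t)) (Icc t1 T) := by
        intro c hc
        obtain ⟨hcont, _, _, _, _⟩ := hG c (lt_of_lt_of_le hα hc)
        apply hcont.comp ((by fun_prop : Continuous (fun t : ℝ => 1 - t)).continuousOn)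
        intro t ht
        rw [hTdef] at ht
        show (1:ℝ) - t ∈ Ioc 0 1
        exact ⟨by linarith [ht.2], by linarith [ht.1, ht1.1]⟩
      have hfderiv : ∀ c : ℝ, α ≤ c → ∀ t ∈ Ico t1 T,
          HasDerivWithinAt (fun t => G c (1 - t)) (Fc p (1/c) (1-t) (G c (1-t))) (Ici t) t := by
        intro c hc t ht
        exact (hrev c (lt_of_lt_of_le hα hc) t (lt_of_lt_of_le ht1.1 ht.1)
          (by have := (hmemIoo t ht).1; linarith)).hasDerivWithinAt
      have hfmem : ∀ c : ℝ, α ≤ c → ∀ t ∈ Ico t1 T, G c (1 - t) ∈ Icc (0:ℝ) R :=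
        fun c hc t ht => key1 c hc (1-t) (hmemIcc t ht)
      have hfb : ∀ t ∈ Ico t1 T, dist (Fc p (1/b) (1-t) (G b (1-t))) (v t (G b (1-t)))
          ≤ C0 * |1/b - 1/b'| := by
        intro t ht
        rw [hvdef]
        dsimp only
        rw [hclamp t ht, Real.dist_eq]
        have hw := hfmem b hb t ht
        have := Fc_param_diff (c := 1/b) (c' := 1/b') (y := 1-t) (R := R)
          hp hy0p (hmemIcc t ht).1 hw.1 hw.2
        rw [← hC0def] at this
        exact this
      have hgb : ∀ t ∈ Ico t1 T, dist (Fc p (1/b') (1-t) (G b' (1-t))) (v t (G b' (1-t)))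
          ≤ 0 := by
        intro t ht
        rw [hvdef]
        dsimp only
        rw [hclamp t ht, dist_self]
      have := dist_le_of_approx_trajectories_ODE_of_mem (fun t _ => hv t)
        (hfcont b hb) (hfderiv b hb) hfb (hfmem b hb)
        (hfcont b' hb') (hfderiv b' hb') hgb (hfmem b' hb')
        (le_refl (dist (G b (1-t1)) (G b' (1-t1)))) T ⟨ht1.2.le, le_refl _⟩
      have h1T : (1:ℝ) - T = y0 := by rw [hTdef]; ring
      rw [h1T, add_zero] at this
      have hKne : ((K.toNNReal : ℝ)) = K := Real.coe_toNNReal K (by linarith)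
      rw [gronwallBound_of_K_ne_0 (by rw [hKne]; exact hKp.ne')] at this
      rw [hKne] at this
      refine this.trans ?_
      have hTt1 : T - t1 ≤ 1 := by rw [hTdef]; linarith [ht1.1]
      have hexp : Real.exp (K * (T - t1)) ≤ Real.exp K := by
        apply Real.exp_le_exp.2
        calc K * (T - t1) ≤ K * 1 := mul_le_mul_of_nonneg_left hTt1 hKp.le
          _ = K := mul_one K
      have hεn : 0 ≤ (C0 * |1/b - 1/b'|) / K :=
        div_nonneg (mul_nonneg hC0n (abs_nonneg _)) hKp.le
      have hδn : (0:ℝ) ≤ dist (G b (1-t1)) (G b' (1-t1)) := dist_nonneg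
      nlinarith [mul_le_mul_of_nonneg_left hexp hδn, mul_le_mul_of_nonneg_left hexp hεn]
    -- limit t1 → 0⁺
    have hd : Tendsto (fun t1 => dist (G b (1-t1)) (G b' (1-t1))) (𝓝[>] (0:ℝ))
        (𝓝 (dist (0:ℝ) 0)) := (hend b hb0).dist (hend b' hb'0)
    rw [dist_self] at hd
    have hlim : Tendsto (fun t1 => dist (G b (1-t1)) (G b' (1-t1)) * Real.exp K
        + (C0 * |1/b - 1/b'|) / K * (Real.exp K - 1)) (𝓝[>] (0:ℝ))
        (𝓝 (0 * Real.exp K + (C0 * |1/b - 1/b'|) / K * (Real.exp K - 1))) :=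
      (hd.mul_const _).add_const _
    have h0 : dist (G b y0) (G b' y0)
        ≤ 0 * Real.exp K + (C0 * |1/b - 1/b'|) / K * (Real.exp K - 1) := by
      apply ge_of_tendsto hlim
      filter_upwards [Ioo_mem_nhdsGT_of_mem
        (⟨le_refl (0:ℝ), hT⟩ : (0:ℝ) ∈ Ico (0:ℝ) T)] with t1 ht1
      exact hbnd t1 ht1
    linarith [h0]
  -- conclude continuity at `a`
  have key3 : Tendsto (fun b => dist (G b y0) (G a y0)) (𝓝 a) (𝓝 0) := by
    apply squeeze_zero' (Eventually.of_forall fun b => dist_nonneg)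
    · filter_upwards [Ioi_mem_nhds hαa] with b hb
      exact key2 b a (le_of_lt hb) (by linarith)
    · have h1 : ContinuousAt (fun b : ℝ => 1/b) a :=
        ContinuousAt.div continuousAt_const continuousAt_id ha0.ne'
      have h2 : ContinuousAt (fun b : ℝ => (C0 * |1/b - 1/a|)/K*(Real.exp K - 1)) a :=
        ((((h1.sub continuousAt_const).abs).const_mul C0).div_const K).mul_const _
      have h3 := h2.tendsto
      simp only [sub_self, abs_zero, mul_zero, zero_div, zero_mul] at h3
      exact h3
  exact tendsto_iff_dist_tendsto_zero.mpr key3
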